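/- arXiv:2207.08209 — 3 statements merged into one kernel-verified Lean document; each statement's English description precedes it below -/
import Mathlib

section
/- Let K be a field of characteristic p > 0 and D a derivation of K with D^p = 0 (the p-fold composition is the zero map). For any f, g ∈ K^p, the derivations fD and gD commute: (fD)∘(gD) = (gD)∘(fD), and moreover (fD)^p = 0. -/
/-- Let `K` be a field of characteristic `p > 0` and `D` a
derivation of `K` with `D^p = 0`. For any `f, g ∈ K^p`, the derivations `fD`
and `gD` commute, and `(fD)^p = 0`. -/
theorem stmt2 (K : Type*) [Field K] (p : ℕ) [Fact p.Prime] [CharP K p]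
    (D : K → K) (hadd : ∀ a b : K, D (a + b) = D a + D b)
    (hmul : ∀ a b : K, D (a * b) = a * D b + b * D a)
    (hDp : ∀ a : K, D^[p] a = 0)
    (f g : K) (hf : f ∈ (frobenius K p).fieldRange)
    (hg : g ∈ (frobenius K p).fieldRange) :
    ((fun a : K => f * D a) ∘ (fun a : K => g * D a) =
      (fun a : K => g * D a) ∘ (fun a : K => f * D a)) ∧
    (∀ a : K, (fun a : K => f * D a)^[p] a = 0) := by
  have hone : D 1 = 0 := by simpa using hmul 1 1
  have hpow : ∀ (x : K) (n : ℕ), D (x ^ (n + 1)) = (n + 1 : K) * x ^ n * D x := by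
    intro x n
    induction n with
    | zero => simp
    | succ n ih =>
      have : x ^ (n + 2) = x * x ^ (n + 1) := by ring
      rw [this, hmul, ih]
      push_cast
      ring
  have hpow0 : ∀ (x : K), D x = 0 → ∀ n : ℕ, D (x ^ n) = 0 := by
    intro x hx n
    cases n with
    | zero => simpa using hone
    | succ n => rw [hpow, hx, mul_zero]
  have hp1 : ∃ k, p = k + 1 := ⟨p - 1, (Nat.succ_pred_eq_of_pos (Fact.out (p := p.Prime)).pos).symm⟩
  have hkill : ∀ x : K, x ∈ (frobenius K p).fieldRange → D x = 0 := by
    rintro x ⟨y, rfl⟩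
    obtain ⟨k, hk⟩ := hp1
    show D (y ^ p) = 0
    rw [hk, hpow]
    have : ((k : K) + 1) = ((p : K)) := by rw [hk]; push_cast; ring
    rw [this, CharP.cast_eq_zero, zero_mul, zero_mul]
  have hDf : D f = 0 := hkill f hf
  have hDg : D g = 0 := hkill g hg
  constructor
  · funext a
    simp only [Function.comp_apply]
    rw [hmul, hmul, hDf, hDg]
    ring
  · intro a
    have key : ∀ (n : ℕ) (a : K), (fun a : K => f * D a)^[n] a = f ^ n * D^[n] a := by
      intro n
      induction n with
      | zero => intro a; simp
      | succ n ih =>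
        intro a
        rw [Function.iterate_succ_apply', Function.iterate_succ_apply', ih]
        show f * D (f ^ n * D^[n] a) = _
        rw [hmul, hpow0 f hDf n]
        ring
    rw [key, hDp, mul_zero]
end

section
/- Let A be a discrete valuation ring with maximal ideal m and residue field κ, and let B be a local A-algebra which is a discrete valuation ring, finite and free of rank d as an A-module, with the same residue field κ (i.e., the induced map on residue fields is an isomorphism). Suppose z ∈ B generates the maximal ideal of B and z^d ∈ A. Then z^d generates m, and the A-algebra map A[T]/(T^d − z^d) → B sending T to z is an isomorphism. -/
open Polynomial IsLocalRing

/-- Let `A ⊆ B` be discrete valuation rings, with `B` a local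
`A`-algebra, finite free of rank `d` as an `A`-module, inducing an isomorphism
on residue fields. If `z` is a uniformizer of `B` with `z^d = w ∈ A`, then `w`
is a uniformizer of `A` and the `A`-algebra map `A[T]/(T^d - w) → B`, `T ↦ z`,
is an isomorphism (i.e. `T ↦ z` is surjective with kernel `(T^d - w)`). -/
theorem stmt6 (A B : Type*) [CommRing A] [IsDomain A] [IsDiscreteValuationRing A]
    [CommRing B] [IsDomain B] [IsDiscreteValuationRing B] [Algebra A B]
    [Module.Finite A B] [Module.Free A B]
    (d : ℕ) (hd : Module.finrank A B = d)
    (hres : ∀ b : B, ∃ a : A, b - algebraMap A B a ∈ IsLocalRing.maximalIdeal B)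
    (z : B) (hz : IsLocalRing.maximalIdeal B = Ideal.span {z})
    (w : A) (hw : algebraMap A B w = z ^ d) :
    IsLocalRing.maximalIdeal A = Ideal.span {w} ∧
    Function.Surjective (Polynomial.aeval z : Polynomial A →ₐ[A] B) ∧
    RingHom.ker (Polynomial.aeval z : Polynomial A →ₐ[A] B) =
      Ideal.span {Polynomial.X ^ d - Polynomial.C w} := by
  classical
  have hdpos : 0 < d := hd ▸ Module.finrank_pos
  have hzmem : z ∈ maximalIdeal B := hz ▸ Ideal.mem_span_singleton_self z
  have hznu : ¬ IsUnit z := fun h => (mem_maximalIdeal z).mp hzmem h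
  have hzne : z ≠ 0 := by
    rintro rfl
    exact IsDiscreteValuationRing.not_a_field B
      (by rw [hz]; exact Ideal.span_singleton_eq_bot.mpr rfl)
  have hzirr : Irreducible z := (IsDiscreteValuationRing.irreducible_iff_uniformizer z).mpr hz
  -- the algebra map is a local homomorphism
  have hcomap : (maximalIdeal B).comap (algebraMap A B) = maximalIdeal A :=
    IsLocalRing.eq_maximalIdeal
      (Ideal.isMaximal_comap_of_isIntegral_of_isMaximal (R := A) (S := B) (maximalIdeal B))
  have hmem : ∀ a : A, a ∈ maximalIdeal A ↔ algebraMap A B a ∈ maximalIdeal B := by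
    intro a; rw [← hcomap]; rfl
  -- key approximation lemma
  have key : ∀ n (b : B), ∃ c : B, b - z ^ n * c ∈ Submodule.span A ((z ^ ·) '' Set.Iio n) := by
    intro n
    induction n with
    | zero => exact fun b => ⟨b, by simp⟩
    | succ n ih =>
      intro b
      obtain ⟨c, hc⟩ := ih b
      obtain ⟨a, ha⟩ := hres c
      rw [hz, Ideal.mem_span_singleton] at ha
      obtain ⟨c', hc'⟩ := ha
      refine ⟨c', ?_⟩
      have hcc : c = algebraMap A B a + z * c' := by linear_combination hc'
      have heq : b - z ^ (n+1) * c' = (b - z ^ n * c) + a • z ^ n := by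
        rw [Algebra.smul_def, hcc]; ring
      rw [heq]
      refine Submodule.add_mem _ ?_
        (Submodule.smul_mem _ a (Submodule.subset_span ⟨n, Nat.lt_succ_self n, rfl⟩))
      exact Submodule.span_mono
        (Set.image_mono (Set.Iio_subset_Iio (Nat.le_succ n))) hc
  -- Nakayama
  have span_top : ∀ n : ℕ, z ^ n ∈ Ideal.map (algebraMap A B) (maximalIdeal A) →
      Submodule.span A ((z ^ ·) '' Set.Iio n) = ⊤ := by
    intro n hn
    set N := Submodule.span A ((z ^ ·) '' Set.Iio n) with hN
    have hle : (⊤ : Submodule A B) ≤ N ⊔ (maximalIdeal A) • ⊤ := by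
      intro b _
      obtain ⟨c, hc⟩ := key n b
      have hz' : z ^ n * c ∈ (maximalIdeal A) • (⊤ : Submodule A B) := by
        rw [Ideal.smul_top_eq_map]
        exact Ideal.mul_mem_right c _ hn
      have hb : b = (b - z ^ n * c) + z ^ n * c := by ring
      rw [hb]
      exact Submodule.add_mem _ (Submodule.mem_sup_left hc) (Submodule.mem_sup_right hz')
    have h2 : (maximalIdeal A) • (⊤ : Submodule A B) ≤ N :=
      Submodule.smul_le_of_le_smul_of_le_jacobson_bot Module.Finite.fg_top
        (IsLocalRing.maximalIdeal_le_jacobson _) hle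
    exact top_le_iff.mp (le_trans hle (sup_le le_rfl h2))
  have card_le : ∀ n : ℕ, Submodule.span A ((z ^ ·) '' Set.Iio n) = ⊤ → d ≤ n := by
    intro n hn
    have hrange : Set.range (fun i : Fin n => z ^ (i : ℕ)) = (z ^ ·) '' Set.Iio n := by
      ext b
      constructor
      · rintro ⟨i, rfl⟩; exact ⟨i, i.isLt, rfl⟩
      · rintro ⟨m, hm, rfl⟩; exact ⟨⟨m, hm⟩, rfl⟩
    have := finrank_le_of_span_eq_top (R := A) (v := fun i : Fin n => z ^ (i : ℕ))
      (by rw [hrange]; exact hn)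
    simpa [hd] using this
  -- w is not a unit
  have hwm : w ∈ maximalIdeal A := by
    rw [mem_maximalIdeal, mem_nonunits_iff]
    intro hu
    exact hznu ((isUnit_pow_iff hdpos.ne').mp (hw ▸ hu.map (algebraMap A B)))
  -- a uniformizer of A
  obtain ⟨π, hπ⟩ := IsDiscreteValuationRing.exists_irreducible A
  have hπspan : maximalIdeal A = Ideal.span {π} :=
    (IsDiscreteValuationRing.irreducible_iff_uniformizer π).mp hπ
  have hπm : π ∈ maximalIdeal A := hπspan ▸ Ideal.mem_span_singleton_self π
  have hπB : algebraMap A B π ≠ 0 := by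
    intro h
    refine hπ.ne_zero ?_
    have h1 : π • (1 : B) = 0 := by rw [← Algebra.algebraMap_eq_smul_one, h]
    rcases smul_eq_zero.mp h1 with h2 | h2
    · exact h2
    · exact absurd h2 one_ne_zero
  obtain ⟨e, u, hu⟩ := IsDiscreteValuationRing.associated_pow_irreducible hπB hzirr
  -- hu : algebraMap A B π * u = z ^ e
  have hze : z ^ e ∈ Ideal.map (algebraMap A B) (maximalIdeal A) := by
    rw [← hu]
    exact Ideal.mul_mem_right _ _ (Ideal.mem_map_of_mem _ hπm)
  have hde : d ≤ e := card_le e (span_top e hze)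
  -- write w = π * a with a a unit
  obtain ⟨a, ha⟩ := Ideal.mem_span_singleton.mp (hπspan ▸ hwm)
  have hba : IsUnit (algebraMap A B a) := by
    have hπe : algebraMap A B π = z ^ e * ↑u⁻¹ := by
      rw [← hu]
      rw [mul_assoc]
      simp
    have h1 : z ^ d * (1 : B) = z ^ d * (z ^ (e - d) * (↑u⁻¹ * algebraMap A B a)) := by
      have h2 : z ^ d * (z ^ (e - d) * (↑u⁻¹ * algebraMap A B a))
          = z ^ e * ↑u⁻¹ * algebraMap A B a := by
        rw [← mul_assoc, ← mul_assoc, ← pow_add, Nat.add_sub_cancel' hde]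
      rw [h2, ← hπe, ← map_mul, ← ha, hw, mul_one]
    have h3 : (1 : B) = z ^ (e - d) * (↑u⁻¹ * algebraMap A B a) :=
      mul_left_cancel₀ (pow_ne_zero d hzne) h1
    have h4 : IsUnit (z ^ (e - d) * (↑u⁻¹ * algebraMap A B a)) := h3 ▸ isUnit_one
    exact isUnit_of_mul_isUnit_right (isUnit_of_mul_isUnit_right h4)
  have haunit : IsUnit a := by
    by_contra hna
    exact (mem_maximalIdeal _).mp ((hmem a).mp ((mem_maximalIdeal a).mpr hna)) hba
  have hwspan : maximalIdeal A = Ideal.span {w} := by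
    rw [hπspan, ha, Ideal.span_singleton_mul_right_unit haunit]
  -- surjectivity
  have hzd : z ^ d ∈ Ideal.map (algebraMap A B) (maximalIdeal A) := by
    rw [← hw]
    exact Ideal.mem_map_of_mem _ hwm
  have hspan_d := span_top d hzd
  have hsurj : Function.Surjective (aeval z : A[X] →ₐ[A] B) := by
    intro b
    have hb : b ∈ Submodule.span A ((z ^ ·) '' Set.Iio d) := hspan_d ▸ Submodule.mem_top
    have hsub : Submodule.span A ((z ^ ·) '' Set.Iio d) ≤
        LinearMap.range (aeval z : A[X] →ₐ[A] B).toLinearMap := by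
      rw [Submodule.span_le]
      rintro _ ⟨m, _, rfl⟩
      exact ⟨X ^ m, by simp⟩
    obtain ⟨p, hp⟩ := hsub hb
    exact ⟨p, hp⟩
  -- the kernel
  set f : A[X] := X ^ d - C w with hf
  have hmon : f.Monic := monic_X_pow_sub_C w hdpos.ne'
  have hfz : aeval z f = 0 := by simp [hf, hw]
  set φ : AdjoinRoot f →ₐ[A] B := AdjoinRoot.liftAlgHom f (Algebra.ofId A B) z hfz with hφ
  have hφmk : ∀ p : A[X], φ (AdjoinRoot.mk f p) = aeval z p := fun p => AdjoinRoot.liftAlgHom_mk f (Algebra.ofId A B) z hfz p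
  have hφsurj : Function.Surjective φ := by
    intro b
    obtain ⟨p, hp⟩ := hsurj b
    exact ⟨AdjoinRoot.mk f p, by rw [hφmk]; exact hp⟩
  let pb : PowerBasis A (AdjoinRoot f) := AdjoinRoot.powerBasis' hmon
  have hpbdim : pb.dim = d := by
    show f.natDegree = d
    rw [hf]
    exact natDegree_X_pow_sub_C
  haveI : Module.Finite A (AdjoinRoot f) := Module.Finite.of_basis pb.basis
  have hcard : Fintype.card (Module.Free.ChooseBasisIndex A B) = Fintype.card (Fin pb.dim) := by
    rw [Fintype.card_fin, hpbdim, ← hd, Module.finrank_eq_card_chooseBasisIndex]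
  let ψ : B ≃ₗ[A] AdjoinRoot f :=
    (Module.Free.chooseBasis A B).equiv pb.basis (Fintype.equivOfCardEq hcard)
  have hφinj : Function.Injective φ := by
    have hendo : Function.Surjective (ψ.toLinearMap ∘ₗ φ.toLinearMap) :=
      ψ.surjective.comp hφsurj
    have hinj := OrzechProperty.injective_of_surjective_endomorphism
      (ψ.toLinearMap ∘ₗ φ.toLinearMap) hendo
    intro x y hxy
    exact hinj (by simp [LinearMap.comp_apply, hxy])
  refine ⟨hwspan, hsurj, ?_⟩
  apply le_antisymm
  · intro p hp
    have h0 : φ (AdjoinRoot.mk f p) = 0 := by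
      rw [hφmk]
      exact RingHom.mem_ker.mp hp
    have h1 : AdjoinRoot.mk f p = 0 := hφinj (by rw [h0, map_zero])
    exact Ideal.mem_span_singleton.mpr (AdjoinRoot.mk_eq_zero.mp h1)
  · rw [Ideal.span_le]
    intro q hq
    rw [Set.mem_singleton_iff] at hq
    subst hq
    exact RingHom.mem_ker.mpr hfz
end

section
/- Let k ⊆ L ⊆ K be fields of characteristic p > 0, where K is a function field in one variable over k (so [K : kK^p] = p), the extension K/L is finite and purely inseparable of degree p^m, and k ⊆ L. Then L = kK^{p^m}. -/
/-- Let `k ⊆ L ⊆ K` be fields of characteristic `p > 0`, where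
`K` is a function field in one variable over `k` (meaning
`[K : k K^{p^j}] = p^j` for all `j`), and `K/L` is finite purely inseparable of
degree `p^m`. Then `L = k K^{p^m}`. -/
theorem stmt10 (K : Type*) [Field K] (p : ℕ) [Fact p.Prime] [CharP K p]
    (k L : Subfield K) (hkL : k ≤ L)
    (hfunction : ∀ j : ℕ,
      Module.finrank
        (↥(Subfield.closure ((k : Set K) ∪ Set.range fun a : K => a ^ p ^ j))) K = p ^ j)
    (m : ℕ)
    (hdeg : Module.finrank (↥L) K = p ^ m)
    (hpi : ∀ a : K, ∃ j : ℕ, a ^ p ^ j ∈ L) :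
    L = Subfield.closure ((k : Set K) ∪ Set.range fun a : K => a ^ p ^ m) := by
  have hp := (Fact.out : p.Prime)
  have hppos : 0 < p ^ m := pow_pos hp.pos m
  set F := Subfield.closure ((k : Set K) ∪ Set.range fun a : K => a ^ p ^ m) with hF
  -- char p on L
  haveI : ExpChar (↥L) p := ExpChar.prime hp
  haveI : FiniteDimensional (↥L) K :=
    Module.finite_of_finrank_pos (by rw [hdeg]; exact hppos)
  haveI : IsPurelyInseparable (↥L) K := by
    rw [isPurelyInseparable_iff_pow_mem (↥L) p]
    intro x
    obtain ⟨j, hj⟩ := hpi x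
    exact ⟨j, ⟨⟨_, hj⟩, rfl⟩⟩
  -- every a^{p^m} ∈ L
  have hpow : ∀ a : K, a ^ p ^ m ∈ L := by
    intro a
    obtain ⟨n, y, hmin⟩ := IsPurelyInseparable.minpoly_eq_X_pow_sub_C (↥L) p a
    have hint : IsIntegral (↥L) a := IsIntegral.of_finite _ _
    have hdvd : (minpoly (↥L) a).natDegree ∣ Module.finrank (↥L) K :=
      minpoly.degree_dvd hint
    rw [hmin, hdeg] at hdvd
    rw [Polynomial.natDegree_X_pow_sub_C] at hdvd
    have hnm : n ≤ m := (Nat.pow_dvd_pow_iff_le_right hp.one_lt).1 hdvd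
    have haroot : a ^ p ^ n = (y : K) := by
      have := minpoly.aeval (↥L) a
      rw [hmin] at this
      exact (by simpa [sub_eq_zero] using this : a ^ p ^ n = algebraMap (↥L) K y)
    have : a ^ p ^ m = (y : K) ^ p ^ (m - n) := by
      rw [← haroot, ← pow_mul, ← pow_add, Nat.add_sub_cancel' hnm]
    rw [this]
    exact pow_mem y.2 _
  -- F ≤ L
  have hFL : F ≤ L := by
    rw [hF]
    apply Subfield.closure_le.2
    rintro x (hx | ⟨a, rfl⟩)
    · exact hkL hx
    · exact hpow a
  -- degrees
  haveI : FiniteDimensional (↥F) K :=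
    Module.finite_of_finrank_pos (by rw [hfunction m]; exact hppos)
  letI : Algebra (↥F) (↥L) := (Subfield.inclusion hFL).toAlgebra
  haveI : IsScalarTower (↥F) (↥L) K :=
    IsScalarTower.of_algebraMap_eq fun x => rfl
  haveI : FiniteDimensional (↥F) (↥L) := FiniteDimensional.left (↥F) (↥L) K
  have hmul : Module.finrank (↥F) (↥L) * Module.finrank (↥L) K = Module.finrank (↥F) K :=
    Module.finrank_mul_finrank _ _ _
  rw [hdeg, hfunction m] at hmul
  have h1 : Module.finrank (↥F) (↥L) = 1 :=
    mul_right_cancel₀ hppos.ne' (by rw [hmul, one_mul])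
  have hbot : (⊥ : Subalgebra (↥F) (↥L)) = ⊤ :=
    Subalgebra.bot_eq_top_iff_finrank_eq_one.2 h1
  refine le_antisymm (fun x hx => ?_) hFL
  have : (⟨x, hx⟩ : ↥L) ∈ (⊥ : Subalgebra (↥F) (↥L)) := hbot ▸ trivial
  obtain ⟨y, hy⟩ := Algebra.mem_bot.1 this
  have : (y : K) = x := congrArg Subtype.val hy
  exact this ▸ y.2
end
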